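/- Failure of non-positivity for 0 < α < 1/2: for every real α with 0 < α < 1/2, there exist real numbers 0 < r1 < r2 such that (2*α^2 - 5*α + 2)*r1^2*r2^3 - (4*α^2 - 7*α + 6)*r1^3*r2^2 + (2*α^2 - 3*α - 2)*r1^4*r2 + (α - 2)*r1^5 > 0. -/

import Mathlib

/-- Failure of non-positivity of the numerator of `Q1` for `0 < α < 1/2`. -/
theorem Q1_numerator_pos_of_alpha_lt_half (α : ℝ) (hα0 : 0 < α) (hα : α < 1 / 2) :
    ∃ r1 r2 : ℝ, 0 < r1 ∧ r1 < r2 ∧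
      (2 * α ^ 2 - 5 * α + 2) * r1 ^ 2 * r2 ^ 3 - (4 * α ^ 2 - 7 * α + 6) * r1 ^ 3 * r2 ^ 2 +
        (2 * α ^ 2 - 3 * α - 2) * r1 ^ 4 * r2 + (α - 2) * r1 ^ 5 > 0 := by
  set c := 2 * α ^ 2 - 5 * α + 2 with hcdef
  have hc : 0 < c := by nlinarith
  have hc2 : c < 2 := by nlinarith
  refine ⟨1, 13 / c, one_pos, ?_, ?_⟩
  · rw [lt_div_iff₀ hc]; linarith
  · set t := 13 / c with htdef
    have hct : c * t = 13 := by rw [htdef]; field_simp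
    have ht : 6 < t := by rw [htdef, lt_div_iff₀ hc]; linarith
    have h1 : c * t ^ 3 = 13 * t ^ 2 := by
      have : c * t ^ 3 = (c * t) * t ^ 2 := by ring
      rw [this, hct]
    nlinarith [sq_nonneg t, sq_nonneg (t - 6), mul_pos hα0 (by linarith : (0:ℝ) < t)]
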